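/- Let G be a group with a left-invariant metric d, and for every r > 0 let G_r be the subgroup of G generated by the ball B(1_G, r) = {g ∈ G : d(1_G, g) ≤ r}. If asdim(G_r, d) ≤ n for every r > 0, then asdim(G, d) ≤ n. -/
import Mathlib


open Metric Set

/-- The chain relation generating `r`-components of a subset `A`. -/
def ChainRel {X : Type*} [MetricSpace X] (A : Set X) (r : ℝ) : X → X → Prop :=
  Relation.ReflTransGen (fun a b => b ∈ A ∧ dist a b ≤ r)

/-- The `r`-components of `A` are `R`-bounded. -/
def CompBounded {X : Type*} [MetricSpace X] (A : Set X) (r R : ℝ) : Prop :=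
  ∀ x ∈ A, ∀ y ∈ A, ChainRel A r x y → dist x y ≤ R

/-- `D` is an `n`-dimensional control function for the metric subspace `A`. -/
def IsControlOn {X : Type*} [MetricSpace X] (A : Set X) (n : ℕ) (D : ℝ → ℝ) : Prop :=
  ∀ r > 0, ∃ C : Fin (n + 1) → Set X,
    (∀ i, C i ⊆ A) ∧ A ⊆ (⋃ i, C i) ∧ ∀ i, CompBounded (C i) r (D r)

/-- `asdim A ≤ n`. -/
def AsdimLE {X : Type*} [MetricSpace X] (A : Set X) (n : ℕ) : Prop :=
  ∃ D : ℝ → ℝ, (∀ r > 0, 0 < D r) ∧ IsControlOn A n D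

/-- Let `G` be a group with a left-invariant metric and for `r > 0` let `G_r` be the
subgroup generated by the closed ball `B(1, r)`. If `asdim G_r ≤ n` (with the restricted
metric) for every `r > 0`, then `asdim G ≤ n`. -/
theorem stmt7 {G : Type*} [Group G] [MetricSpace G]
    (hinv : ∀ g x y : G, dist (g * x) (g * y) = dist x y) (n : ℕ)
    (h : ∀ r > 0, AsdimLE ((Subgroup.closure (Metric.closedBall (1 : G) r) : Subgroup G) :
      Set G) n) :
    AsdimLE (Set.univ : Set G) n := by
  classical
  choose D hDpos hCtrl using h
  refine ⟨fun r => if hr : 0 < r then D r hr r else 1, ?_, ?_⟩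
  · intro r hr
    simp only [dif_pos hr]
    exact hDpos r hr r hr
  · intro r hr
    obtain ⟨C, hCsub, hCcov, hCbnd⟩ := hCtrl r hr r hr
    set H : Subgroup G := Subgroup.closure (Metric.closedBall (1 : G) r) with hH
    have key : ∀ x y : G, dist x y ≤ r →
        (QuotientGroup.mk x : G ⧸ H) = QuotientGroup.mk y := by
      intro x y hxy
      rw [QuotientGroup.eq]
      apply Subgroup.subset_closure
      have : dist (x * 1) (x * (x⁻¹ * y)) = dist 1 (x⁻¹ * y) := hinv x 1 (x⁻¹ * y)
      simp only [mul_one, mul_inv_cancel_left] at this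
      rw [Metric.mem_closedBall, dist_comm, ← this]
      exact hxy
    set rep : G → G := fun x => (QuotientGroup.mk x : G ⧸ H).out with hrep
    have hrepmem : ∀ x : G, (rep x)⁻¹ * x ∈ H := by
      intro x
      rw [← QuotientGroup.eq]
      exact QuotientGroup.out_eq' _
    have hrepcong : ∀ x y : G, (QuotientGroup.mk x : G ⧸ H) = QuotientGroup.mk y →
        rep x = rep y := by
      intro x y hxy; simp only [hrep, hxy]
    refine ⟨fun i => {x | (rep x)⁻¹ * x ∈ C i}, fun i => subset_univ _, ?_, ?_⟩
    · intro x _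
      have := hCcov (hrepmem x)
      simp only [Set.mem_iUnion] at this ⊢
      obtain ⟨i, hi⟩ := this
      exact ⟨i, hi⟩
    · intro i x hx y hy hchain
      have main : ∀ z : G, ChainRel {x | (rep x)⁻¹ * x ∈ C i} r x z →
          (QuotientGroup.mk x : G ⧸ H) = QuotientGroup.mk z ∧
          ChainRel (C i) r ((rep x)⁻¹ * x) ((rep x)⁻¹ * z) := by
        intro z hz
        induction hz with
        | refl => exact ⟨rfl, Relation.ReflTransGen.refl⟩
        | tail hab hbc ih =>
          obtain ⟨hbmem, hd⟩ := hbc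
          obtain ⟨hmk, hch⟩ := ih
          have hmk2 := hmk.trans (key _ _ hd)
          refine ⟨hmk2, hch.tail ⟨?_, ?_⟩⟩
          · rw [hrepcong x _ hmk2]; exact hbmem
          · rw [hinv]; exact hd
      obtain ⟨hmk, hch⟩ := main y hchain
      have hb := hCbnd i _ hx _ (by rw [hrepcong x y hmk]; exact hy) hch
      have := hinv (rep x) ((rep x)⁻¹ * x) ((rep x)⁻¹ * y)
      simp only [mul_inv_cancel_left] at this
      rw [this]
      simpa [dif_pos hr] using hb
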